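/- Let J ⊆ I = {1,…,n} and let P^J be the Gibbs kernel on X^n that resamples the coordinates in J and leaves the rest fixed: P^J(x, ·) is the law of the point x' with x'_{I∖J} = x_{I∖J} and x'_J ∼ Φ_x, where (Φ_x)_{x∈X^n} is a measurable family of probability measures on X^J that depends on x only through the boundary coordinates x_{∂J}. Suppose that for every j ∈ ∂J and every pair x, z ∈ X^n with x_k = z_k for all k ≠ j, a coupling Ψ_{j,x,z} of Φ_x and Φ_z is given. Define the n×n matrix W^J by: W^J_{i,j} = 1[i=j] for i ∈ I∖J; for i ∈ J, W^J_{i,j} = sup{Ψ_{j,x,z}({(x', z') : x'_i ≠ z'_i}) : x, z ∈ X^n, x_k = z_k for all k ≠ j} if j ∈ ∂J, and W^J_{i,j} = 0 if j ∉ ∂J. Then W^J is a Wasserstein matrix for P^J; in particular a Wasserstein matrix for the ideal Gibbs block kernel can be chosen with the Gibbs block structure for J. -/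

import Mathlib

open MeasureTheory ProbabilityTheory Finset
open scoped ENNReal

/-- Oscillation of `f` with respect to the `i`-th coordinate. -/
noncomputable def osc {n : ℕ} {X : Type*} (i : Fin n) (f : (Fin n → X) → ℝ) : ℝ :=
  sSup {d : ℝ | ∃ x z : Fin n → X, (∀ k, k ≠ i → x k = z k) ∧ d = |f x - f z|}

/-- `W` is a Wasserstein matrix for the Markov kernel `P` on `X^n`. -/
def IsWassersteinMatrix {n : ℕ} {X : Type*} [MeasurableSpace X]
    (P : Kernel (Fin n → X) (Fin n → X)) (W : Matrix (Fin n) (Fin n) ℝ) : Prop :=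
  (∀ i j, 0 ≤ W i j) ∧
  ∀ f : (Fin n → X) → ℝ, Measurable f → (∃ C, ∀ x, |f x| ≤ C) →
    ∀ j, osc j (fun x => ∫ y, f y ∂(P x)) ≤ ∑ i, osc i f * W i j

/-- `Ψ` is a coupling of `μ` and `ν`. -/
def IsCoupling {E : Type*} [MeasurableSpace E] (Ψ : Measure (E × E)) (μ ν : Measure E) : Prop :=
  Ψ.map Prod.fst = μ ∧ Ψ.map Prod.snd = ν

/-- `k`-fold composition of a Markov kernel with itself. -/
noncomputable def kpow {E : Type*} [MeasurableSpace E] (P : Kernel E E) : ℕ → Kernel E E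
  | 0 => Kernel.id
  | (k + 1) => P ∘ₖ kpow P k

/-- Maximum absolute row sum norm `‖A‖_∞`. -/
noncomputable def rowNorm {n : ℕ} (A : Matrix (Fin n) (Fin n) ℝ) : ℝ :=
  ⨆ i, ∑ j, |A i j|

/-- The boundary `∂J` of a block `J ⊆ I`. -/
def bdry {n : ℕ} (J : Finset (Fin n)) : Finset (Fin n) :=
  Finset.univ.filter fun t => t ∉ J ∧ ∃ s ∈ J, ((s : ℕ) = (t : ℕ) + 1 ∨ (t : ℕ) = (s : ℕ) + 1)

/-- `W` has the Gibbs block structure for block `J`. -/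
def GibbsBlock {n : ℕ} (J : Finset (Fin n)) (W : Matrix (Fin n) (Fin n) ℝ) : Prop :=
  (∀ i j, 0 ≤ W i j ∧ W i j ≤ 1) ∧
  (∀ i, i ∉ J → ∀ j, W i j = if i = j then 1 else 0) ∧
  (∀ i ∈ J, ∀ j, j ∉ bdry J → W i j = 0)

section Aux
variable {n : ℕ} {X : Type*} [Nonempty X]

lemma osc_set_bddAbove {C : ℝ} (i : Fin n) {f : (Fin n → X) → ℝ} (hC : ∀ x, |f x| ≤ C) :
    BddAbove {d : ℝ | ∃ x z : Fin n → X, (∀ k, k ≠ i → x k = z k) ∧ d = |f x - f z|} := by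
  refine ⟨C + C, ?_⟩
  rintro d ⟨x, z, -, rfl⟩
  calc |f x - f z| ≤ |f x| + |f z| := abs_sub _ _
    _ ≤ C + C := add_le_add (hC x) (hC z)

lemma osc_nonneg {C : ℝ} (i : Fin n) {f : (Fin n → X) → ℝ} (hC : ∀ x, |f x| ≤ C) :
    0 ≤ osc i f := by
  have h0 : (0:ℝ) ∈ {d : ℝ | ∃ x z : Fin n → X, (∀ k, k ≠ i → x k = z k) ∧ d = |f x - f z|} := by
    refine ⟨Classical.arbitrary _, Classical.arbitrary _, fun _ _ => rfl, by simp⟩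
  exact le_csSup (osc_set_bddAbove i hC) h0

lemma abs_sub_le_osc {C : ℝ} (i : Fin n) {f : (Fin n → X) → ℝ} (hC : ∀ x, |f x| ≤ C)
    {x z : Fin n → X} (h : ∀ k, k ≠ i → x k = z k) : |f x - f z| ≤ osc i f :=
  le_csSup (osc_set_bddAbove i hC) ⟨x, z, h, rfl⟩

lemma abs_sub_le_sum_osc {C : ℝ} {f : (Fin n → X) → ℝ} (hC : ∀ x, |f x| ≤ C)
    (S : Finset (Fin n)) : ∀ u v : Fin n → X, (∀ k, k ∉ S → u k = v k) →
    |f u - f v| ≤ ∑ i ∈ S, osc i f := by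

  induction S using Finset.induction_on with
  | empty =>
    intro u v h
    have : u = v := funext fun k => h k (by simp)
    simp [this]
  | @insert a S ha IH =>
    intro u v h
    set w : Fin n → X := fun k => if k = a then v k else u k with hw
    have h1 : |f u - f w| ≤ osc a f :=
      abs_sub_le_osc a hC (fun k hk => by simp [hw, hk])
    have h2 : |f w - f v| ≤ ∑ i ∈ S, osc i f := by
      refine IH w v (fun k hk => ?_)
      by_cases hka : k = a
      · simp [hw, hka]
      · simp only [hw, if_neg hka]
        exact h k (by simp [hka, hk])
    calc |f u - f v| ≤ |f u - f w| + |f w - f v| := abs_sub_le _ _ _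
      _ ≤ osc a f + ∑ i ∈ S, osc i f := add_le_add h1 h2
      _ = ∑ i ∈ insert a S, osc i f := by rw [Finset.sum_insert ha]

end Aux

theorem stmt11 {n : ℕ} {X : Type*} [MeasurableSpace X] [StandardBorelSpace X] [Nonempty X]
    (J : Finset (Fin n))
    (Φ : (Fin n → X) → Measure ({ i : Fin n // i ∈ J } → X))
    (hΦp : ∀ x, IsProbabilityMeasure (Φ x))
    (hΦdep : ∀ x z : Fin n → X, (∀ i ∈ bdry J, x i = z i) → Φ x = Φ z)
    (P : Kernel (Fin n → X) (Fin n → X)) [IsMarkovKernel P]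
    (hP : ∀ x, P x =
      (Φ x).map (fun zJ => fun i : Fin n => if h : i ∈ J then zJ ⟨i, h⟩ else x i))
    (Ψ : Fin n → (Fin n → X) → (Fin n → X) →
      Measure (({ i : Fin n // i ∈ J } → X) × ({ i : Fin n // i ∈ J } → X)))
    (hΨ : ∀ j ∈ bdry J, ∀ x z : Fin n → X, (∀ k, k ≠ j → x k = z k) →
      IsProbabilityMeasure (Ψ j x z) ∧
      (Ψ j x z).map Prod.fst = Φ x ∧ (Ψ j x z).map Prod.snd = Φ z)
    (W : Matrix (Fin n) (Fin n) ℝ)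
    (hWdef : ∀ i j, W i j =
      if hi : i ∈ J then
        (if j ∈ bdry J then
          sSup {r : ℝ | ∃ x z : Fin n → X, (∀ k, k ≠ j → x k = z k) ∧
            r = (Ψ j x z {q | q.1 ⟨i, hi⟩ ≠ q.2 ⟨i, hi⟩}).toReal}
        else 0)
      else (if i = j then 1 else 0)) :
    IsWassersteinMatrix P W ∧ GibbsBlock J W := by
  classical
  letI := upgradeStandardBorel X
  have hbd_notJ : ∀ i ∈ bdry J, i ∉ J := fun i hi => (Finset.mem_filter.1 hi).2.1
  -- entries of W lie in [0,1]
  have hW01 : ∀ i j, 0 ≤ W i j ∧ W i j ≤ 1 := by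
    intro i j
    rw [hWdef]
    by_cases hi : i ∈ J
    · rw [dif_pos hi]
      by_cases hj : j ∈ bdry J
      · rw [if_pos hj]
        have hmem : ∀ r ∈ {r : ℝ | ∃ x z : Fin n → X, (∀ k, k ≠ j → x k = z k) ∧
            r = (Ψ j x z {q | q.1 ⟨i, hi⟩ ≠ q.2 ⟨i, hi⟩}).toReal}, 0 ≤ r ∧ r ≤ 1 := by
          rintro r ⟨x, z, hxz, rfl⟩
          refine ⟨ENNReal.toReal_nonneg, ?_⟩
          haveI := (hΨ j hj x z hxz).1
          simpa using ENNReal.toReal_mono ENNReal.one_ne_top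
            (prob_le_one (μ := Ψ j x z) (s := {q | q.1 ⟨i, hi⟩ ≠ q.2 ⟨i, hi⟩}))
        have h0 : (Ψ j (Classical.arbitrary _) (Classical.arbitrary _)
            {q | q.1 ⟨i, hi⟩ ≠ q.2 ⟨i, hi⟩}).toReal ∈ {r : ℝ | ∃ x z : Fin n → X,
            (∀ k, k ≠ j → x k = z k) ∧
            r = (Ψ j x z {q | q.1 ⟨i, hi⟩ ≠ q.2 ⟨i, hi⟩}).toReal} :=
          ⟨Classical.arbitrary _, Classical.arbitrary _, fun _ _ => rfl, rfl⟩
        have hbdd : BddAbove {r : ℝ | ∃ x z : Fin n → X, (∀ k, k ≠ j → x k = z k) ∧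
            r = (Ψ j x z {q | q.1 ⟨i, hi⟩ ≠ q.2 ⟨i, hi⟩}).toReal} :=
          ⟨1, fun r hr => (hmem r hr).2⟩
        refine ⟨le_trans (hmem _ h0).1 (le_csSup hbdd h0),
          Real.sSup_le (fun r hr => (hmem r hr).2) zero_le_one⟩
      · rw [if_neg hj]; norm_num
    · rw [dif_neg hi]
      by_cases hij : i = j <;> simp [hij]
  have hmerge : ∀ u : Fin n → X, Measurable (fun y : ({ i : Fin n // i ∈ J } → X) =>
      (fun i : Fin n => if h : i ∈ J then y ⟨i, h⟩ else u i)) := by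
    intro u
    apply measurable_pi_lambda
    intro i
    by_cases h : i ∈ J
    · simpa only [dif_pos h] using measurable_pi_apply (⟨i, h⟩ : { i : Fin n // i ∈ J })
    · simpa only [dif_neg h] using measurable_const
  refine ⟨⟨fun i j => (hW01 i j).1, ?_⟩, hW01, ?_, ?_⟩
  · -- the oscillation bound
    rintro f hf ⟨C, hC⟩ j
    have hRHS0 : 0 ≤ ∑ i, osc i f * W i j :=
      Finset.sum_nonneg fun i _ => mul_nonneg (osc_nonneg i hC) (hW01 i j).1
    refine Real.sSup_le ?_ hRHS0
    rintro d ⟨x, z, hxz, rfl⟩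
    show |(∫ y, f y ∂(P x)) - ∫ y, f y ∂(P z)| ≤ ∑ i, osc i f * W i j
    have hPf : ∀ u : Fin n → X, ∫ y, f y ∂(P u) =
        ∫ y, f (fun i : Fin n => if h : i ∈ J then y ⟨i, h⟩ else u i) ∂(Φ u) := fun u => by
      rw [hP u, integral_map (hmerge u).aemeasurable hf.aestronglyMeasurable]
    by_cases hjJ : j ∈ J
    · -- the resampled block: the two integrals coincide
      have hΦ : Φ x = Φ z := hΦdep x z fun i hi => hxz i (fun e => hbd_notJ i hi (e ▸ hjJ))
      have hm : (fun y : ({ i : Fin n // i ∈ J } → X) =>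
            f (fun i : Fin n => if h : i ∈ J then y ⟨i, h⟩ else x i))
          = fun y => f (fun i : Fin n => if h : i ∈ J then y ⟨i, h⟩ else z i) := by
        funext y; congr 1; funext i
        by_cases h : i ∈ J
        · simp only [dif_pos h]
        · simp only [dif_neg h]; exact hxz i (fun e => h (e ▸ hjJ))
      rw [hPf x, hPf z, hΦ, hm]
      simpa using hRHS0
    · -- j ∉ J : split the sum
      have hcompl : ∑ i ∈ Jᶜ, osc i f * W i j = osc j f := by
        rw [Finset.sum_eq_single j]
        · rw [hWdef]; simp [hjJ]
        · intro i hi hij; rw [hWdef]; simp [Finset.mem_compl.1 hi, hij]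
        · intro h; exact absurd (Finset.mem_compl.2 hjJ) h
      have hsplit : ∑ i, osc i f * W i j = osc j f + ∑ i ∈ J, osc i f * W i j := by
        rw [← Finset.sum_compl_add_sum J fun i => osc i f * W i j, hcompl]
      by_cases hjb : j ∈ bdry J
      · -- main case : use the coupling
        obtain ⟨hΨp, hfst, hsnd⟩ := hΨ j hjb x z hxz
        haveI := hΨp
        haveI := hΦp x
        haveI := hΦp z
        set ν := Ψ j x z with hν
        set mx : ({ i : Fin n // i ∈ J } → X) → (Fin n → X) :=
          fun y => fun i : Fin n => if h : i ∈ J then y ⟨i, h⟩ else x i with hmx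
        set mz : ({ i : Fin n // i ∈ J } → X) → (Fin n → X) :=
          fun y => fun i : Fin n => if h : i ∈ J then y ⟨i, h⟩ else z i with hmz
        have e1 : ∫ y, f (mx y) ∂(Φ x) = ∫ q, f (mx q.1) ∂ν := by
          rw [← hfst]
          exact integral_map measurable_fst.aemeasurable
            (hf.comp (hmerge x)).aestronglyMeasurable
        have e2 : ∫ y, f (mz y) ∂(Φ z) = ∫ q, f (mz q.2) ∂ν := by
          rw [← hsnd]
          exact integral_map measurable_snd.aemeasurable
            (hf.comp (hmerge z)).aestronglyMeasurable
        have hint1 : Integrable (fun q => f (mx q.1)) ν :=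
          (integrable_const C).mono'
            ((hf.comp ((hmerge x).comp measurable_fst)).aestronglyMeasurable)
            (ae_of_all _ fun q => by simpa [Real.norm_eq_abs] using hC _)
        have hint2 : Integrable (fun q => f (mz q.2)) ν :=
          (integrable_const C).mono'
            ((hf.comp ((hmerge z).comp measurable_snd)).aestronglyMeasurable)
            (ae_of_all _ fun q => by simpa [Real.norm_eq_abs] using hC _)
        rw [hPf x, hPf z, e1, e2, ← integral_sub hint1 hint2]
        set A : Fin n → Set (({ i : Fin n // i ∈ J } → X) × ({ i : Fin n // i ∈ J } → X)) :=
          fun i => {q | ∃ h : i ∈ J, q.1 ⟨i, h⟩ ≠ q.2 ⟨i, h⟩} with hA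
        have hAmeas : ∀ i, MeasurableSet (A i) := by
          intro i
          by_cases hi : i ∈ J
          · have heq : A i = {q : ({ i : Fin n // i ∈ J } → X) ×
                ({ i : Fin n // i ∈ J } → X) | q.1 ⟨i, hi⟩ = q.2 ⟨i, hi⟩}ᶜ := by
              ext q
              simp only [hA, Set.mem_setOf_eq, Set.mem_compl_iff]
              exact ⟨fun ⟨h, hne⟩ => hne, fun hne => ⟨hi, hne⟩⟩
            rw [heq]
            exact (StronglyMeasurable.measurableSet_eq_fun
              (((measurable_pi_apply _).comp measurable_fst).stronglyMeasurable)
              (((measurable_pi_apply _).comp measurable_snd).stronglyMeasurable)).compl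
          · have : A i = ∅ := by ext q; simp [hA, hi]
            simp [this]
        set g : (({ i : Fin n // i ∈ J } → X) × ({ i : Fin n // i ∈ J } → X)) → ℝ :=
          fun q => osc j f + ∑ i ∈ J, osc i f * (A i).indicator (fun _ => (1:ℝ)) q with hg
        have hptwise : ∀ q, |f (mx q.1) - f (mz q.2)| ≤ g q := by
          intro q
          set T : Finset (Fin n) := J.filter (fun i => q ∈ A i) with hT
          have hjT : j ∉ T := fun hj' => hjJ (Finset.mem_filter.1 hj').1
          have h1 : |f (mx q.1) - f (mz q.2)| ≤ ∑ i ∈ insert j T, osc i f := by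
            refine abs_sub_le_sum_osc hC _ _ _ (fun k hk => ?_)
            simp only [Finset.mem_insert, not_or] at hk
            obtain ⟨hkj, hkT⟩ := hk
            by_cases h : k ∈ J
            · show (if h' : k ∈ J then q.1 ⟨k, h'⟩ else x k)
                  = (if h' : k ∈ J then q.2 ⟨k, h'⟩ else z k)
              rw [dif_pos h, dif_pos h]
              by_contra hne
              exact hkT (Finset.mem_filter.2 ⟨h, ⟨h, hne⟩⟩)
            · show (if h' : k ∈ J then q.1 ⟨k, h'⟩ else x k)
                  = (if h' : k ∈ J then q.2 ⟨k, h'⟩ else z k)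
              rw [dif_neg h, dif_neg h]
              exact hxz k hkj
          have h2 : ∑ i ∈ insert j T, osc i f = osc j f + ∑ i ∈ T, osc i f :=
            Finset.sum_insert hjT
          have h3 : ∑ i ∈ T, osc i f = ∑ i ∈ J, osc i f * (A i).indicator (fun _ => (1:ℝ)) q := by
            rw [hT, Finset.sum_filter]
            refine Finset.sum_congr rfl fun i _ => ?_
            by_cases h : q ∈ A i
            · simp [h, Set.indicator_of_mem]
            · simp [h, Set.indicator_of_notMem]
          calc |f (mx q.1) - f (mz q.2)| ≤ ∑ i ∈ insert j T, osc i f := h1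
            _ = osc j f + ∑ i ∈ T, osc i f := h2
            _ = g q := by rw [h3]
        have hints : ∀ i ∈ J, Integrable
            (fun q => osc i f * (A i).indicator (fun _ => (1:ℝ)) q) ν := by
          intro i _
          exact ((integrable_const (1:ℝ)).indicator (hAmeas i)).const_mul _
        have hgint : Integrable g ν := by
          rw [hg]
          exact (integrable_const _).add (integrable_finset_sum _ hints)
        have hgval : ∫ q, g q ∂ν = osc j f + ∑ i ∈ J, osc i f * (ν (A i)).toReal := by
          rw [hg]
          rw [integral_add (integrable_const _) (integrable_finset_sum _ hints),
            integral_const, integral_finset_sum _ hints]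
          simp only [probReal_univ, smul_eq_mul, one_mul]
          congr 1
          refine Finset.sum_congr rfl fun i _ => ?_
          rw [integral_const_mul, integral_indicator_const _ (hAmeas i)]
          simp [mul_comm, Measure.real]
        have hkey : ∀ i ∈ J, (ν (A i)).toReal ≤ W i j := by
          intro i hi
          rw [hWdef, dif_pos hi, if_pos hjb]
          have hAset : A i = {q : ({ i : Fin n // i ∈ J } → X) ×
              ({ i : Fin n // i ∈ J } → X) | q.1 ⟨i, hi⟩ ≠ q.2 ⟨i, hi⟩} := by
            ext q
            simp only [hA, Set.mem_setOf_eq]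
            exact ⟨fun ⟨h, hne⟩ => hne, fun hne => ⟨hi, hne⟩⟩
          have hbdd : BddAbove {r : ℝ | ∃ x z : Fin n → X, (∀ k, k ≠ j → x k = z k) ∧
              r = (Ψ j x z {q | q.1 ⟨i, hi⟩ ≠ q.2 ⟨i, hi⟩}).toReal} := by
            refine ⟨1, ?_⟩
            rintro r ⟨x', z', hxz', rfl⟩
            haveI := (hΨ j hjb x' z' hxz').1
            simpa using ENNReal.toReal_mono ENNReal.one_ne_top
              (prob_le_one (μ := Ψ j x' z') (s := {q | q.1 ⟨i, hi⟩ ≠ q.2 ⟨i, hi⟩}))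
          refine le_csSup hbdd ⟨x, z, hxz, ?_⟩
          rw [hν, hAset]
        calc |∫ q, (f (mx q.1) - f (mz q.2)) ∂ν|
            ≤ ∫ q, |f (mx q.1) - f (mz q.2)| ∂ν := by
              simpa [Real.norm_eq_abs] using
                norm_integral_le_integral_norm (μ := ν) (fun q => f (mx q.1) - f (mz q.2))
          _ ≤ ∫ q, g q ∂ν := integral_mono (hint1.sub hint2).abs hgint hptwise
          _ = osc j f + ∑ i ∈ J, osc i f * (ν (A i)).toReal := hgval
          _ ≤ osc j f + ∑ i ∈ J, osc i f * W i j := by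
              refine add_le_add_right (Finset.sum_le_sum fun i hi => ?_) _
              exact mul_le_mul_of_nonneg_left (hkey i hi) (osc_nonneg i hC)
          _ = ∑ i, osc i f * W i j := hsplit.symm
      · -- j ∉ J and j ∉ ∂J : only the j-th oscillation matters
        have hRHS : ∑ i, osc i f * W i j = osc j f := by
          rw [hsplit, Finset.sum_eq_zero (fun i hi => by
            rw [hWdef, dif_pos hi, if_neg hjb, mul_zero]), add_zero]
        have hΦ : Φ x = Φ z := hΦdep x z fun i hi => hxz i (fun e => hjb (e ▸ hi))
        haveI := hΦp z
        have hint : ∀ u : Fin n → X, Integrable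
            (fun y => f (fun i : Fin n => if h : i ∈ J then y ⟨i, h⟩ else u i)) (Φ z) :=
          fun u => (integrable_const C).mono' (hf.comp (hmerge u)).aestronglyMeasurable
            (ae_of_all _ fun y => by simpa [Real.norm_eq_abs] using hC _)
        rw [hRHS, hPf x, hPf z, hΦ, ← integral_sub (hint x) (hint z)]
        have hptw : ∀ y : { i : Fin n // i ∈ J } → X,
            |f (fun i : Fin n => if h : i ∈ J then y ⟨i, h⟩ else x i)
              - f (fun i : Fin n => if h : i ∈ J then y ⟨i, h⟩ else z i)| ≤ osc j f := by
          intro y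
          refine abs_sub_le_osc j hC (fun k hk => ?_)
          by_cases h : k ∈ J
          · show (if h' : k ∈ J then y ⟨k, h'⟩ else x k)
                = (if h' : k ∈ J then y ⟨k, h'⟩ else z k)
            rw [dif_pos h, dif_pos h]
          · show (if h' : k ∈ J then y ⟨k, h'⟩ else x k)
                = (if h' : k ∈ J then y ⟨k, h'⟩ else z k)
            rw [dif_neg h, dif_neg h]
            exact hxz k hk
        have := norm_integral_le_of_norm_le_const (μ := Φ z)
          (f := fun y => f (fun i : Fin n => if h : i ∈ J then y ⟨i, h⟩ else x i)
            - f (fun i : Fin n => if h : i ∈ J then y ⟨i, h⟩ else z i))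
          (C := osc j f) (ae_of_all _ fun y => by simpa [Real.norm_eq_abs] using hptw y)
        simpa [Real.norm_eq_abs, measure_univ] using this
  · -- identity rows outside J
    intro i hi j
    rw [hWdef, dif_neg hi]
  · -- zero columns outside the boundary
    intro i hi j hj
    rw [hWdef, dif_pos hi, if_neg hj]
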